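/- Let φ be an admissible error function and let f : D → ℝ be φ-Jensen convex. Then for all positive integers n, k and all x, y ∈ D: f((n·x + k·y)/(n + k)) ≤ (n/(n+k))·f(x) + (k/(n+k))·f(y) + k·n·φ((x − y)/(n + k)). -/

import Mathlib

noncomputable section

/-- The distance of a real number to the set of integers. -/
noncomputable def dZ (x : ℝ) : ℝ := ⨅ k : ℤ, |x - (k : ℝ)|

variable {X : Type*} [AddCommGroup X] [Module ℝ X]

/-- The difference set `D_Δ = {x - y : x, y ∈ D}`. -/
def diffSet (D : Set X) : Set X := {u | ∃ x ∈ D, ∃ y ∈ D, u = x - y}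

/-- The half difference set `(1/2)·D_Δ`. -/
def halfDiff (D : Set X) : Set X := {u | ∃ x ∈ D, ∃ y ∈ D, u = (2⁻¹ : ℝ) • (x - y)}

/-- `f` is `φ`-Jensen convex on `D`. -/
def JCW (D : Set X) (φ : X → ℝ) (f : X → ℝ) : Prop :=
  ∀ x ∈ D, ∀ y ∈ D,
    f ((2⁻¹ : ℝ) • (x + y)) ≤ 2⁻¹ * f x + 2⁻¹ * f y + φ ((2⁻¹ : ℝ) • (x - y))

/-- `φ` is an admissible error function on `(1/2)·D_Δ`:
it is even there, vanishes at `0`, and admits a `φ`-Jensen convex function. -/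
def Admissible (D : Set X) (φ : X → ℝ) : Prop :=
  (∀ u ∈ halfDiff D, φ (-u) = φ u) ∧ φ 0 = 0 ∧ ∃ f : X → ℝ, JCW D φ f

/-- `φ*(u) = inf_{m ∈ ℕ, m ≥ 1} m² · φ(u/m)`, valued in `[-∞, ∞)` viewed inside `EReal`. -/
noncomputable def phiStar (φ : X → ℝ) (u : X) : EReal :=
  ⨅ m : ℕ+, ((((m : ℕ) : ℝ) ^ 2 * φ ((1 / ((m : ℕ) : ℝ)) • u) : ℝ) : EReal)

/-- The real-valued version of `φ*` (equal to `φ*` wherever `φ*` is finite). -/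
noncomputable def phiStarR (φ : X → ℝ) (u : X) : ℝ := (phiStar φ u).toReal

/-- The extended error function
`E[φ](λ,u) = sup { f(λx+(1-λ)y) - λf(x) - (1-λ)f(y) : f φ-Jensen convex, x,y ∈ D, x-y = u }`. -/
noncomputable def Eerr (D : Set X) (φ : X → ℝ) (l : ℝ) (u : X) : EReal :=
  sSup {c : EReal | ∃ f : X → ℝ, JCW D φ f ∧ ∃ x ∈ D, ∃ y ∈ D, x - y = u ∧
    c = ((f (l • x + (1 - l) • y) - l * f x - (1 - l) * f y : ℝ) : EReal)}


private lemma seq_aux_stmt10 (N : ℕ) (b : ℕ → ℝ) (h0 : b 0 = 0) (hN : b N = 0)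
    (hconv : ∀ j, j + 2 ≤ N → 2 * b (j+1) ≤ b j + b (j+2)) :
    ∀ j ≤ N, b j ≤ 0 := by
  set g : ℕ → ℝ := fun i => b (i+1) - b i with hg
  have hmono : ∀ i j, i ≤ j → j + 1 ≤ N → g i ≤ g j := by
    intro i j hij
    induction j, hij using Nat.le_induction with
    | base => intro _; exact le_rfl
    | succ j hij ih =>
      intro hjN
      have h1 := hconv j (by omega)
      have h2 := ih (by omega)
      simp only [hg] at *
      linarith
  have hb : ∀ m, b m = ∑ i ∈ Finset.range m, g i := by
    intro m
    rw [Finset.sum_range_sub (f := b), h0, sub_zero]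
  intro j hj
  rcases Nat.eq_zero_or_pos j with h | hpos
  · simp [h, h0]
  rcases eq_or_lt_of_le hj with h | hjN
  · simp [h, hN]
  obtain ⟨m, rfl⟩ : ∃ m, j = m + 1 := ⟨j - 1, by omega⟩
  have bound1 : ∑ i ∈ Finset.range (m+1), g i ≤ (m+1 : ℕ) * g m := by
    have := Finset.sum_le_card_nsmul (Finset.range (m+1)) g (g m) ?_
    · simpa [nsmul_eq_mul] using this
    · intro i hi
      exact hmono i m (by simpa [Nat.lt_succ_iff] using hi) (by omega)
  have bound2 : ((N - (m+1) : ℕ) : ℝ) * g m ≤ ∑ i ∈ Finset.Ico (m+1) N, g i := by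
    have := Finset.card_nsmul_le_sum (Finset.Ico (m+1) N) g (g m) ?_
    · simpa [nsmul_eq_mul] using this
    · intro i hi
      obtain ⟨h1, h2⟩ := Finset.mem_Ico.mp hi
      exact hmono m i (by omega) (by omega)
  have hsplit : ∑ i ∈ Finset.range (m+1), g i + ∑ i ∈ Finset.Ico (m+1) N, g i = 0 := by
    rw [Finset.sum_range_add_sum_Ico g (by omega : m + 1 ≤ N), ← hb, hN]
  rw [hb]
  rcases le_or_gt 0 (g m) with hgm | hgm
  · have : (0:ℝ) ≤ ((N - (m+1) : ℕ) : ℝ) * g m := mul_nonneg (by positivity) hgm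
    linarith
  · have : ((m+1 : ℕ) : ℝ) * g m ≤ 0 :=
      mul_nonpos_of_nonneg_of_nonpos (by positivity) hgm.le
    linarith

/-- a `φ`-Jensen convex function satisfies the rational convexity inequality
with error term `k·n·φ((x-y)/(n+k))`. -/
theorem stmt10 {X : Type*} [AddCommGroup X] [Module ℝ X] (D : Set X)
    (hD : Convex ℝ D) (hne : D.Nonempty) (φ : X → ℝ) (hφ : Admissible D φ)
    (f : X → ℝ) (hf : JCW D φ f) (n k : ℕ) (hn : 0 < n) (hk : 0 < k)
    {x y : X} (hx : x ∈ D) (hy : y ∈ D) :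
    f (((n : ℝ) / ((n : ℝ) + (k : ℝ))) • x + ((k : ℝ) / ((n : ℝ) + (k : ℝ))) • y) ≤
      (n : ℝ) / ((n : ℝ) + (k : ℝ)) * f x + (k : ℝ) / ((n : ℝ) + (k : ℝ)) * f y +
        (k : ℝ) * (n : ℝ) * φ ((1 / ((n : ℝ) + (k : ℝ))) • (x - y)) := by
  have hf' : ∀ x ∈ D, ∀ y ∈ D,
      f ((2⁻¹ : ℝ) • (x + y)) ≤ 2⁻¹ * f x + 2⁻¹ * f y + φ ((2⁻¹ : ℝ) • (x - y)) := hf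
  clear hf hφ hne
  set N : ℕ := n + k with hNdef
  have hNcast : ((N : ℕ) : ℝ) = (n : ℝ) + (k : ℝ) := by push_cast [hNdef]; ring
  have hNpos : (0:ℝ) < (n : ℝ) + (k : ℝ) := by positivity
  have hNne : ((n : ℝ) + (k : ℝ)) ≠ 0 := ne_of_gt hNpos
  set u : X := (1 / ((n : ℝ) + (k : ℝ))) • (x - y) with hu
  set p : ℕ → X := fun j => y + (j : ℝ) • u with hp
  have hmem : ∀ j ≤ N, p j ∈ D := by
    intro j hj
    have hjr : (j : ℝ) ≤ (n : ℝ) + (k : ℝ) := by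
      rw [← hNcast]; exact_mod_cast hj
    have h1 : (0:ℝ) ≤ 1 - (j : ℝ) / ((n : ℝ) + (k : ℝ)) := by
      rw [sub_nonneg, div_le_one hNpos]; exact hjr
    have h2 : (0:ℝ) ≤ (j : ℝ) / ((n : ℝ) + (k : ℝ)) := by positivity
    have h3 : (1 - (j : ℝ) / ((n : ℝ) + (k : ℝ))) + (j : ℝ) / ((n : ℝ) + (k : ℝ)) = 1 := by
      ring
    have hmemD := hD hy hx h1 h2 h3
    have hpt : p j = (1 - (j : ℝ) / ((n : ℝ) + (k : ℝ))) • y +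
        ((j : ℝ) / ((n : ℝ) + (k : ℝ))) • x := by
      simp only [hp, hu]
      match_scalars <;> (field_simp; try ring)
    rw [hpt]; exact hmemD
  set a : ℕ → ℝ := fun j => f (p j) with ha
  set ε : ℝ := φ u with hε
  have hAconv : ∀ j, j + 2 ≤ N → 2 * a (j+1) ≤ a j + a (j+2) + 2 * ε := by
    intro j hjN
    have h1 := hf' (p (j+2)) (hmem _ hjN) (p j) (hmem _ (by omega))
    have e1 : (2⁻¹ : ℝ) • (p (j+2) + p j) = p (j+1) := by
      simp only [hp]; push_cast; module
    have e2 : (2⁻¹ : ℝ) • (p (j+2) - p j) = u := by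
      simp only [hp]; push_cast; module
    rw [e1, e2] at h1
    simp only [ha, ← hε] at *
    linarith
  set b : ℕ → ℝ := fun j => a j - (((N : ℝ) - (j : ℝ)) / (N : ℝ)) * a 0 -
      ((j : ℝ) / (N : ℝ)) * a N - (j : ℝ) * ((N : ℝ) - (j : ℝ)) * ε with hb
  have hb0 : b 0 = 0 := by
    simp only [hb, Nat.cast_zero]
    rw [hNcast]
    field_simp
    ring
  have hbN : b N = 0 := by
    simp only [hb]
    rw [hNcast]
    field_simp
    ring
  have hbconv : ∀ j, j + 2 ≤ N → 2 * b (j+1) ≤ b j + b (j+2) := by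
    intro j hjN
    have h1 := hAconv j hjN
    have key : b j + b (j+2) - 2 * b (j+1) = (a j + a (j+2) - 2 * a (j+1)) + 2 * ε := by
      simp only [hb]
      push_cast
      ring
    linarith
  have hfinal := seq_aux_stmt10 N b hb0 hbN hbconv n (by omega)
  have hNn : ((N : ℝ) - (n : ℝ)) = (k : ℝ) := by rw [hNcast]; ring
  have ha0 : a 0 = f y := by
    simp only [ha, hp, Nat.cast_zero, zero_smul, add_zero]
  have haN : a N = f x := by
    simp only [ha, hp, hu, hNcast]
    congr 1
    rw [smul_smul]
    field_simp
    simp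
  have hpn : ((n : ℝ) / ((n : ℝ) + (k : ℝ))) • x + ((k : ℝ) / ((n : ℝ) + (k : ℝ))) • y
      = p n := by
    simp only [hp, hu]
    match_scalars <;> (field_simp; try ring)
  rw [hpn]
  simp only [hb, hNn, hNcast, ha0, haN] at hfinal
  have : f (p n) = a n := rfl
  rw [this]
  have h2 : ((n : ℝ) + (k : ℝ) - (n : ℝ)) = (k : ℝ) := by ring
  rw [h2] at hfinal
  have h3 : ((n : ℝ) + (k : ℝ) - (n : ℝ)) / ((n : ℝ) + (k : ℝ)) = (k : ℝ) / ((n : ℝ) + (k : ℝ)) := by rw [h2]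
  linarith
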